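/- Angle lower bound for optimum tours: Let T be an optimum tour of a planar EUC_2D TSP instance containing edge pq, and let r ∉ {p,q} with tour-neighbors x, y. Let δ_r > 0 satisfy |rs| ≥ δ_r for all vertices s ≠ r, let l_p = δ_r + l(pq) − l(qr) − 1 and l_q = δ_r + l(pq) − l(pr) − 1, and assume l_p + l_q ≥ l(pq) − 1/2. Then the angle γ = ∠(x r y) satisfies cos γ ≤ 1 − (l_p + l_q − l(pq) + 1/2)² / (2 δ_r²); equivalently γ ≥ γ_r := arccos(1 − (l_p + l_q − l(pq) + 1/2)²/(2δ_r²)). -/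

import Mathlib

open EuclideanGeometry

/-- The Euclidean plane. -/
abbrev Plane := EuclideanSpace ℝ (Fin 2)

/-- A tour (Hamiltonian cycle), encoded as a cyclic permutation with no fixed points. -/
def IsTour {V : Type*} [Fintype V] (σ : Equiv.Perm V) : Prop :=
  σ.IsCycle ∧ ∀ v : V, σ v ≠ v

/-- The length of a tour. -/
noncomputable def tourLength {V : Type*} [Fintype V] (l : V → V → ℝ)
    (σ : Equiv.Perm V) : ℝ :=
  ∑ v, l v (σ v)

/-- An optimum tour: a tour of minimum length. -/
def IsOptimumTour {V : Type*} [Fintype V] (l : V → V → ℝ) (σ : Equiv.Perm V) : Prop :=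
  IsTour σ ∧ ∀ τ : Equiv.Perm V, IsTour τ → tourLength l σ ≤ tourLength l τ

/-- The edge `{a,b}` belongs to the tour `σ`. -/
def edgeIn {V : Type*} [Fintype V] (σ : Equiv.Perm V) (a b : V) : Prop :=
  σ a = b ∨ σ b = a

/-- The 3-opt exchange inequality for an optimum tour. -/
lemma tour_exchange {V : Type*} [Fintype V]
    (l : V → V → ℝ) (σ : Equiv.Perm V) (hopt : IsOptimumTour l σ)
    (p q r x y : V) (hpq : σ p = q) (hrp : r ≠ p) (hrq : r ≠ q)
    (hx : σ r = x) (hy : σ⁻¹ r = y) :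
    l p q + l r x + l y r ≤ l p r + l r q + l y x := by
  classical
  obtain ⟨⟨hcyc, hnf⟩, hmin⟩ := hopt
  have hσy : σ y = r := by rw [← hy]; exact σ.apply_symm_apply r
  -- distinctness facts
  have hpq' : p ≠ q := fun h => hnf p (by rw [hpq, h])
  have hyr : y ≠ r := by
    intro h; apply hnf r; rw [← h, hσy, h]
  have hxr : x ≠ r := fun h => hnf r (by rw [hx, h])
  have hpy : p ≠ y := by
    intro h; apply hrq; rw [← hσy, ← h, hpq]
  have hxq : x ≠ q := by
    intro h; apply hrp; apply σ.injective; rw [hx, hpq, h]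
  have hpr : p ≠ r := Ne.symm hrp
  have hry : r ≠ y := Ne.symm hyr
  -- order of σ
  have hsupp : σ.support = Finset.univ := by
    ext v; simp [Equiv.Perm.mem_support, hnf v]
  set n := Fintype.card V with hn
  have horder : orderOf σ = n := by
    rw [hcyc.orderOf, hsupp, Finset.card_univ]
  have hcard3 : ({p, q, r} : Finset V).card = 3 := by
    rw [Finset.card_insert_of_notMem (by simp [hpq', hpr]),
      Finset.card_insert_of_notMem (by simp [Ne.symm hrq]), Finset.card_singleton]
  have hn3 : 3 ≤ n := by
    calc 3 = ({p, q, r} : Finset V).card := hcard3.symm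
      _ ≤ Finset.univ.card := Finset.card_le_univ _
      _ = n := Finset.card_univ
  have hn0 : 0 < n := by omega
  have keyp : ∀ m : ℕ, 0 < m → m < n → ∀ v, (σ ^ m) v ≠ v := by
    intro m hm hmn v h
    have h1 : σ ^ m = 1 := (hcyc.pow_eq_one_iff' (hnf v)).mpr h
    have h2 := orderOf_dvd_of_pow_eq_one h1
    rw [horder] at h2
    exact absurd (Nat.le_of_dvd hm h2) (by omega)
  have hxy : x ≠ y := by
    intro h
    apply keyp 2 (by norm_num) (by omega) r
    rw [pow_two, Equiv.Perm.mul_apply, hx, h, hσy]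
  have uniq : ∀ j k : ℕ, j < k → k < n → (σ ^ j) q ≠ (σ ^ k) q := by
    intro j k hjk hkn h
    apply keyp (k - j) (by omega) (by omega) ((σ ^ j) q)
    rw [← Equiv.Perm.mul_apply, ← pow_add, Nat.sub_add_cancel hjk.le]
    exact h.symm
  -- index of y
  obtain ⟨a0, ha0⟩ := hcyc.exists_pow_eq (hnf q) (hnf y)
  have hpm := pow_mod_orderOf σ a0
  rw [horder] at hpm
  set a := a0 % n with hadef
  have ha : (σ ^ a) q = y := by rw [hadef, hpm]; exact ha0
  have haln : a < n := Nat.mod_lt _ hn0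
  have hσn : σ ^ n = 1 := by rw [← horder]; exact pow_orderOf_eq_one σ
  have hp_idx : (σ ^ (n - 1)) q = p := by
    rw [← hpq, ← Equiv.Perm.mul_apply, ← pow_succ, Nat.sub_add_cancel (by omega), hσn]
    rfl
  have hr_idx : (σ ^ (a + 1)) q = r := by
    rw [pow_succ', Equiv.Perm.mul_apply, ha, hσy]
  have hx_idx : (σ ^ (a + 2)) q = x := by
    rw [show a + 2 = (a + 1) + 1 from rfl, pow_succ', Equiv.Perm.mul_apply, hr_idx, hx]
  have han1 : a + 1 < n := by
    by_contra hcon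
    have he : a + 1 = n := by omega
    rw [he, hσn] at hr_idx
    exact hrq (Eq.symm hr_idx)
  have han2 : a + 2 < n := by
    by_contra hcon
    have he : a + 2 = n := by omega
    rw [he, hσn] at hx_idx
    exact hxq (by rw [← hx_idx]; rfl)
  -- the 3-opt tour
  set τ : Equiv.Perm V := σ * Equiv.swap p y * Equiv.swap y r with hτdef
  have hτp : τ p = r := by
    rw [hτdef]
    simp only [Equiv.Perm.mul_apply]
    rw [Equiv.swap_apply_of_ne_of_ne hpy hpr, Equiv.swap_apply_left, hσy]
  have hτy : τ y = x := by
    rw [hτdef]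
    simp only [Equiv.Perm.mul_apply]
    rw [Equiv.swap_apply_left, Equiv.swap_apply_of_ne_of_ne hrp hry, hx]
  have hτr : τ r = q := by
    rw [hτdef]
    simp only [Equiv.Perm.mul_apply]
    rw [Equiv.swap_apply_right, Equiv.swap_apply_right, hpq]
  have hτo : ∀ v, v ≠ p → v ≠ y → v ≠ r → τ v = σ v := by
    intro v h1 h2 h3
    rw [hτdef]
    simp only [Equiv.Perm.mul_apply]
    rw [Equiv.swap_apply_of_ne_of_ne h2 h3, Equiv.swap_apply_of_ne_of_ne h1 h2]
  have hτnf : ∀ v, τ v ≠ v := by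
    intro v
    by_cases h1 : v = p
    · rw [h1, hτp]; exact hrp
    by_cases h2 : v = y
    · rw [h2, hτy]; exact hxy
    by_cases h3 : v = r
    · rw [h3, hτr]; exact Ne.symm hrq
    rw [hτo v h1 h2 h3]; exact hnf v
  -- orbit computation for τ
  have claim1 : ∀ k, k ≤ a → (τ ^ k) q = (σ ^ k) q := by
    intro k
    induction k with
    | zero => intro _; simp
    | succ k ih =>
      intro hk
      have ihk := ih (by omega)
      have h1 : (σ ^ k) q ≠ p := by
        intro h; rw [← hp_idx] at h; exact uniq k (n - 1) (by omega) (by omega) h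
      have h2 : (σ ^ k) q ≠ y := by
        intro h; rw [← ha] at h; exact uniq k a (by omega) (by omega) h
      have h3 : (σ ^ k) q ≠ r := by
        intro h; rw [← hr_idx] at h; exact uniq k (a + 1) (by omega) (by omega) h
      rw [pow_succ', Equiv.Perm.mul_apply, ihk, hτo _ h1 h2 h3, ← Equiv.Perm.mul_apply,
        ← pow_succ']
  have hτa : (τ ^ a) q = y := (claim1 a le_rfl).trans ha
  have hτa1 : (τ ^ (a + 1)) q = x := by
    rw [pow_succ', Equiv.Perm.mul_apply, hτa, hτy]
  have claim2 : ∀ k, a + 2 ≤ k → k < n → (τ ^ (k - 1)) q = (σ ^ k) q := by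
    intro k
    induction k with
    | zero => omega
    | succ k ih =>
      intro hk hkn
      rcases eq_or_lt_of_le hk with he | hlt
      · rw [← he]
        simpa using hτa1.trans hx_idx.symm
      · have ihk := ih (by omega) (by omega)
        have h1 : (σ ^ k) q ≠ p := by
          intro h; rw [← hp_idx] at h; exact uniq k (n - 1) (by omega) (by omega) h
        have h2 : (σ ^ k) q ≠ y := by
          intro h; rw [← ha] at h; exact uniq a k (by omega) (by omega) h.symm
        have h3 : (σ ^ k) q ≠ r := by
          intro h; rw [← hr_idx] at h; exact uniq (a + 1) k (by omega) (by omega) h.symm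
        rw [show k + 1 - 1 = (k - 1) + 1 from by omega, pow_succ', Equiv.Perm.mul_apply, ihk,
          hτo _ h1 h2 h3, ← Equiv.Perm.mul_apply, ← pow_succ']
  have coverage : ∀ v, ∃ m : ℕ, (τ ^ m) q = v := by
    intro v
    obtain ⟨i0, hi0⟩ := hcyc.exists_pow_eq (hnf q) (hnf v)
    have hpm' := pow_mod_orderOf σ i0
    rw [horder] at hpm'
    have hi : (σ ^ (i0 % n)) q = v := by rw [hpm']; exact hi0
    have hin : i0 % n < n := Nat.mod_lt _ hn0
    set k := i0 % n with hkdef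
    by_cases hk1 : k ≤ a
    · exact ⟨k, (claim1 k hk1).trans hi⟩
    by_cases hk2 : k = a + 1
    · refine ⟨n - 1, ?_⟩
      have hp' : (τ ^ (n - 2)) q = p := by
        have hc := claim2 (n - 1) (by omega) (by omega)
        rw [show n - 1 - 1 = n - 2 from by omega] at hc
        rw [hc, hp_idx]
      have hv : v = r := by rw [← hi, hk2, hr_idx]
      rw [show n - 1 = (n - 2) + 1 from by omega, pow_succ', Equiv.Perm.mul_apply, hp', hτp, hv]
    · exact ⟨k - 1, (claim2 k (by omega) hin).trans hi⟩
  have hτcyc : τ.IsCycle := by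
    refine ⟨q, hτnf q, fun v _ => ?_⟩
    obtain ⟨m, hm⟩ := coverage v
    exact ⟨(m : ℤ), by rw [zpow_natCast]; exact hm⟩
  -- length comparison
  have hlen := hmin τ ⟨hτcyc, hτnf⟩
  unfold tourLength at hlen
  have hzero : ∀ v ∈ Finset.univ, v ∉ ({p, r, y} : Finset V) →
      l v (τ v) - l v (σ v) = 0 := by
    intro v _ hv
    simp only [Finset.mem_insert, Finset.mem_singleton, not_or] at hv
    rw [hτo v hv.1 hv.2.2 hv.2.1, sub_self]
  have hsum0 : ∑ v ∈ ({p, r, y} : Finset V), (l v (τ v) - l v (σ v)) =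
      ∑ v, (l v (τ v) - l v (σ v)) :=
    Finset.sum_subset (Finset.subset_univ _) hzero
  have hprys : ∑ v ∈ ({p, r, y} : Finset V), (l v (τ v) - l v (σ v)) =
      (l p (τ p) - l p (σ p)) + ((l r (τ r) - l r (σ r)) + (l y (τ y) - l y (σ y))) := by
    rw [Finset.sum_insert (by simp [hpr, hpy]), Finset.sum_insert (by simp [hry]),
      Finset.sum_singleton]
  have hge : 0 ≤ ∑ v, (l v (τ v) - l v (σ v)) := by
    rw [Finset.sum_sub_distrib]
    linarith
  rw [← hsum0, hprys, hτp, hτr, hτy, hpq, hx, hσy] at hge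
  linarith

/-- The geometric half: from the combined exchange + rounding inequality to the
cosine bound, via the law of cosines applied to the points at distance `δ` from `C`. -/
lemma geom_bound (A B C : Plane) (δ M : ℝ) (hδ : 0 < δ)
    (hA : δ ≤ dist C A) (hB : δ ≤ dist C B) (hM0 : 0 ≤ M)
    (hM : M ≤ 2 * δ + dist A B - dist C A - dist C B) :
    Real.cos (∠ A C B) ≤ 1 - M ^ 2 / (2 * δ ^ 2) := by
  have hdA : 0 < dist C A := lt_of_lt_of_le hδ hA
  have hdB : 0 < dist C B := lt_of_lt_of_le hδ hB
  set dA := dist C A with hdAdef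
  set dB := dist C B with hdBdef
  set s : ℝ := δ / dA with hsdef
  set t : ℝ := δ / dB with htdef
  have hs : 0 < s := div_pos hδ hdA
  have ht : 0 < t := div_pos hδ hdB
  set A' : Plane := C + s • (A - C) with hA'
  set B' : Plane := C + t • (B - C) with hB'
  have hnAC : ‖A - C‖ = dA := by rw [← dist_eq_norm, dist_comm]
  have hnBC : ‖B - C‖ = dB := by rw [← dist_eq_norm, dist_comm]
  have hCA' : dist C A' = δ := by
    rw [hA', dist_eq_norm, sub_add_cancel_left, norm_neg, norm_smul,
      Real.norm_of_nonneg hs.le, hnAC, hsdef, div_mul_cancel₀ _ hdA.ne']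
  have hCB' : dist C B' = δ := by
    rw [hB', dist_eq_norm, sub_add_cancel_left, norm_neg, norm_smul,
      Real.norm_of_nonneg ht.le, hnBC, htdef, div_mul_cancel₀ _ hdB.ne']
  have h1s : 0 ≤ 1 - s := by
    rw [sub_nonneg, hsdef, div_le_one hdA]; exact hA
  have h1t : 0 ≤ 1 - t := by
    rw [sub_nonneg, htdef, div_le_one hdB]; exact hB
  have hAA' : dist A A' = dA - δ := by
    have he : A - A' = (1 - s) • (A - C) := by
      rw [hA', sub_add_eq_sub_sub, sub_smul, one_smul]
    rw [dist_eq_norm, he, norm_smul, Real.norm_of_nonneg h1s, hnAC, hsdef]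
    field_simp
  have hBB' : dist B B' = dB - δ := by
    have he : B - B' = (1 - t) • (B - C) := by
      rw [hB', sub_add_eq_sub_sub, sub_smul, one_smul]
    rw [dist_eq_norm, he, norm_smul, Real.norm_of_nonneg h1t, hnBC, htdef]
    field_simp
  have e1 : A' -ᵥ C = s • (A -ᵥ C) := by
    rw [vsub_eq_sub, vsub_eq_sub, hA', add_sub_cancel_left]
  have e2 : B' -ᵥ C = t • (B -ᵥ C) := by
    rw [vsub_eq_sub, vsub_eq_sub, hB', add_sub_cancel_left]
  have hangle : ∠ A' C B' = ∠ A C B := by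
    unfold EuclideanGeometry.angle
    rw [e1, e2, InnerProductGeometry.angle_smul_left_of_pos _ _ hs,
      InnerProductGeometry.angle_smul_right_of_pos _ _ ht]
  have hlc := EuclideanGeometry.law_cos A' C B'
  rw [dist_comm A' C, dist_comm B' C, hCA', hCB', hangle] at hlc
  have htri : dist A B ≤ dist A A' + dist A' B' + dist B' B :=
    calc dist A B ≤ dist A B' + dist B' B := dist_triangle _ _ _
      _ ≤ (dist A A' + dist A' B') + dist B' B := by
          linarith [dist_triangle A A' B']
  have hB'B : dist B' B = dB - δ := by rw [dist_comm]; exact hBB'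
  have hμM : M ≤ dist A' B' := by linarith
  have hμ0 : (0 : ℝ) ≤ dist A' B' := dist_nonneg
  have hM2 : M ^ 2 ≤ dist A' B' ^ 2 := by
    have := pow_le_pow_left₀ hM0 hμM 2
    linarith
  have h2δ : (0 : ℝ) < 2 * δ ^ 2 := by positivity
  have hδsq : δ ^ 2 = δ * δ := sq δ
  have hμsq : dist A' B' ^ 2 = dist A' B' * dist A' B' := sq (dist A' B')
  have h1 : Real.cos (∠ A C B) * (2 * δ ^ 2) ≤ 2 * δ ^ 2 - M ^ 2 := by linarith
  have h2 : Real.cos (∠ A C B) ≤ (2 * δ ^ 2 - M ^ 2) / (2 * δ ^ 2) := by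
    rw [le_div_iff₀ h2δ]; exact h1
  refine h2.trans_eq ?_
  rw [sub_div, div_self h2δ.ne']

/-- **Angle lower bound for optimum tours.** If an optimum tour of a planar EUC_2D
instance contains `pq`, the angle `γ` between the two tour edges at `r ∉ {p,q}`
satisfies `cos γ ≤ 1 − (l_p + l_q − l(pq) + 1/2)²/(2δ_r²)`, i.e. `γ ≥ γ_r`. -/
theorem angle_lower_bound {V : Type*} [Fintype V]
    (f : V → Plane) (hf : Function.Injective f)
    (l : V → V → ℝ) (hsymm : ∀ a b, l a b = l b a)
    (hround : ∀ a b : V, l a b - 1/2 ≤ dist (f a) (f b) ∧ dist (f a) (f b) ≤ l a b + 1/2)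
    (σ : Equiv.Perm V) (hopt : IsOptimumTour l σ)
    (p q r x y : V) (hpq : edgeIn σ p q) (hrp : r ≠ p) (hrq : r ≠ q)
    (hx : σ r = x) (hy : σ⁻¹ r = y)
    (δ lp lq : ℝ) (hδ : 0 < δ) (hδr : ∀ v : V, v ≠ r → δ ≤ dist (f r) (f v))
    (hlp : lp = δ + l p q - l q r - 1) (hlq : lq = δ + l p q - l p r - 1)
    (hbasic : l p q - 1/2 ≤ lp + lq) :
    Real.cos (∠ (f x) (f r) (f y)) ≤
        1 - (lp + lq - l p q + 1/2) ^ 2 / (2 * δ ^ 2) ∧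
    Real.arccos (1 - (lp + lq - l p q + 1/2) ^ 2 / (2 * δ ^ 2)) ≤
        ∠ (f x) (f r) (f y) := by
  have hnf := hopt.1.2
  have hxr : x ≠ r := fun h => hnf r (by rw [hx, h])
  have hyr : y ≠ r := by
    have hσy : σ y = r := by rw [← hy]; exact σ.apply_symm_apply r
    intro h; apply hnf r; rw [← h, hσy, h]
  have key : l p q + l r x + l r y ≤ l p r + l q r + l x y := by
    rcases hpq with h | h
    · have hex := tour_exchange l σ hopt p q r x y h hrp hrq hx hy
      have e1 := hsymm r y
      have e2 := hsymm r q
      have e3 := hsymm y x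
      linarith
    · have hex := tour_exchange l σ hopt q p r x y h hrq hrp hx hy
      have e0 := hsymm q p
      have e1 := hsymm r y
      have e2 := hsymm r p
      have e3 := hsymm y x
      linarith
  set M : ℝ := lp + lq - l p q + 1/2 with hM
  have hM0 : 0 ≤ M := by rw [hM]; linarith
  have hMle : M ≤ 2 * δ + dist (f x) (f y) - dist (f r) (f x) - dist (f r) (f y) := by
    have h1 := (hround r x).2
    have h2 := (hround r y).2
    have h3 := (hround x y).1
    rw [hM, hlp, hlq]
    linarith
  have hcos := geom_bound (f x) (f y) (f r) δ M hδ (hδr x hxr) (hδr y hyr) hM0 hMle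
  refine ⟨hcos, ?_⟩
  have hγ1 : 0 ≤ ∠ (f x) (f r) (f y) := EuclideanGeometry.angle_nonneg _ _ _
  have hγ2 : ∠ (f x) (f r) (f y) ≤ Real.pi := EuclideanGeometry.angle_le_pi _ _ _
  have harc : Real.arccos (1 - M ^ 2 / (2 * δ ^ 2)) ≤
      Real.arccos (Real.cos (∠ (f x) (f r) (f y))) := by
    unfold Real.arccos
    exact sub_le_sub_left (Real.monotone_arcsin hcos) _
  rwa [Real.arccos_cos hγ1 hγ2] at harc
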